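/- Let E and F be real normed spaces, C ⊆ E a symmetric convex subset whose linear span is dense in E, and f : C → F a map with ‖f(x)‖ ≤ α‖x‖ for some constant α. Then the following are equivalent: (1) f(0) = 0 and f((x+y)/2) = (f(x)+f(y))/2 for all x, y ∈ C; (2) f(x+y) = f(x)+f(y) whenever x, y, x+y ∈ C; (3) f extends to a bounded linear map E → F. -/

import Mathlib

private lemma aux_ray {F : Type*} [NormedAddCommGroup F] [NormedSpace ℝ F]
    (h : ℝ → F) (M : ℝ)
    (hadd : ∀ s u : ℝ, 0 ≤ s → 0 ≤ u → s + u ≤ 1 → h (s + u) = h s + h u)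
    (hbd : ∀ s : ℝ, 0 ≤ s → s ≤ 1 → ‖h s‖ ≤ M * s)
    (h1 : h 1 = 0) {t : ℝ} (ht0 : 0 ≤ t) (ht1 : t ≤ 1) : h t = 0 := by
  have h00 := hadd 0 0 le_rfl le_rfl (by norm_num)
  rw [add_zero] at h00
  have h0 : h 0 = 0 := (left_eq_add.mp h00)
  have hM : 0 ≤ M := by
    have := hbd 1 zero_le_one le_rfl
    rw [h1, norm_zero, mul_one] at this
    exact this
  have hmul : ∀ (k : ℕ) (s : ℝ), 0 ≤ s → (k : ℝ) * s ≤ 1 →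
      h ((k : ℝ) * s) = (k : ℝ) • h s := by
    intro k
    induction k with
    | zero => intro s hs _; simp [h0]
    | succ n ih =>
      intro s hs hle
      have hns : (n : ℝ) * s ≤ 1 := by
        have : (n : ℝ) * s ≤ ((n : ℝ) + 1) * s := by nlinarith
        push_cast at hle; linarith
      have hkey : h ((n : ℝ) * s + s) = h ((n : ℝ) * s) + h s := by
        apply hadd _ _ (by positivity) hs
        push_cast at hle; linarith
      push_cast
      rw [show ((n : ℝ) + 1) * s = (n : ℝ) * s + s by ring, hkey, ih s hs hns,
        add_smul, one_smul]
  have key : ∀ n : ℕ, 1 ≤ n → ‖h t‖ ≤ M / n := by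
    intro n hn
    have hn0 : (0 : ℝ) < n := by exact_mod_cast hn
    set k := ⌊(n : ℝ) * t⌋₊ with hk
    have hk_le : (k : ℝ) ≤ (n : ℝ) * t := Nat.floor_le (by positivity)
    have hk_lt : (n : ℝ) * t < (k : ℝ) + 1 := Nat.lt_floor_add_one _
    have hr0 : 0 ≤ (n : ℝ) * t - k := by linarith
    have hkn : (k : ℝ) * (1 / n) ≤ 1 := by
      rw [mul_one_div, div_le_one hn0]
      calc (k : ℝ) ≤ (n : ℝ) * t := hk_le
        _ ≤ n := by nlinarith
    have ht_eq : t = (k : ℝ) * (1 / n) + ((n : ℝ) * t - k) / n := by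
      field_simp
      ring
    have h1n : h (1 / n) = 0 := by
      have := hmul n (1 / n) (by positivity) (by rw [mul_one_div, div_self hn0.ne'])
      rw [mul_one_div, div_self hn0.ne', h1] at this
      have := this.symm
      rcases smul_eq_zero.mp this with hc | hc
      · exact absurd hc hn0.ne'
      · exact hc
    have hkzero : h ((k : ℝ) * (1 / n)) = 0 := by
      rw [hmul k (1 / n) (by positivity) hkn, h1n, smul_zero]
    have hstep : h t = h (((n : ℝ) * t - k) / n) := by
      have hs := hadd ((k : ℝ) * (1 / n)) (((n : ℝ) * t - k) / n) (by positivity)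
        (by positivity) (by rw [← ht_eq]; exact ht1)
      rw [← ht_eq] at hs
      rw [hs, hkzero, zero_add]
    rw [hstep]
    calc ‖h (((n : ℝ) * t - k) / n)‖ ≤ M * (((n : ℝ) * t - k) / n) := by
          apply hbd _ (by positivity)
          rw [div_le_one hn0]
          nlinarith
      _ ≤ M * (1 / n) := by
          apply mul_le_mul_of_nonneg_left _ hM
          rw [div_le_div_iff₀ hn0 hn0]
          nlinarith
      _ = M / n := by ring
  by_contra hne
  have hpos : 0 < ‖h t‖ := norm_pos_iff.mpr hne
  obtain ⟨n, hngt⟩ := exists_nat_gt (max 1 (M / ‖h t‖))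
  have hn1 : 1 ≤ n := by
    have : (1 : ℝ) < n := lt_of_le_of_lt (le_max_left _ _) hngt
    exact_mod_cast this.le
  have hn0 : (0 : ℝ) < n := by exact_mod_cast hn1
  have h2 : M / ‖h t‖ < n := lt_of_le_of_lt (le_max_right _ _) hngt
  have h3 : M / n < ‖h t‖ := by
    rw [div_lt_iff₀ hn0]
    rw [div_lt_iff₀ hpos] at h2
    linarith
  exact absurd (key n hn1) (not_le.mpr h3)


private lemma aux_span {E : Type*} [NormedAddCommGroup E] [NormedSpace ℝ E] {C : Set E}
    (hconv : Convex ℝ C) (hsym : ∀ x ∈ C, -x ∈ C) (h0 : (0 : E) ∈ C) {x : E}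
    (hx : x ∈ Submodule.span ℝ C) : ∃ (t : ℝ) (c : E), 0 < t ∧ c ∈ C ∧ x = t • c := by
  induction hx using Submodule.span_induction with
  | mem x hx => exact ⟨1, x, one_pos, hx, (one_smul ℝ x).symm⟩
  | zero => exact ⟨1, 0, one_pos, h0, by simp⟩
  | add x y hx hy ihx ihy =>
    obtain ⟨t, c, ht, hc, rfl⟩ := ihx
    obtain ⟨s, d, hs, hd, rfl⟩ := ihy
    refine ⟨t + s, (t / (t + s)) • c + (s / (t + s)) • d, by positivity,
      hconv hc hd (by positivity) (by positivity) (by field_simp), ?_⟩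
    rw [smul_add, smul_smul, smul_smul]
    have h1 : (t + s) * (t / (t + s)) = t := by field_simp
    have h2 : (t + s) * (s / (t + s)) = s := by field_simp
    rw [h1, h2]
  | smul a x hx ih =>
    obtain ⟨t, c, ht, hc, rfl⟩ := ih
    rcases lt_trichotomy a 0 with h | h | h
    · refine ⟨(-a) * t, -c, mul_pos (neg_pos.2 h) ht, hsym c hc, ?_⟩
      module
    · exact ⟨1, 0, one_pos, h0, by simp [h]⟩
    · exact ⟨a * t, c, mul_pos h ht, hc, (smul_smul a t c)⟩

section Aux

variable {E F : Type*} [NormedAddCommGroup E] [NormedSpace ℝ E]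
    [NormedAddCommGroup F] [NormedSpace ℝ F]

private lemma aux_hadd {C : Set E} (h0 : (0 : E) ∈ C) (f : E → F) (hf0 : f 0 = 0)
    (hmid : ∀ x ∈ C, ∀ y ∈ C, f ((1/2 : ℝ) • (x + y)) = (1/2 : ℝ) • (f x + f y)) :
    ∀ x ∈ C, ∀ y ∈ C, x + y ∈ C → f (x + y) = f x + f y := by
  intro x hx y hy hxy
  have h1 := hmid x hx y hy
  have h2 := hmid (x + y) hxy 0 h0
  rw [add_zero, hf0, add_zero] at h2
  rw [h2] at h1
  exact smul_right_injective F (by norm_num : (1/2 : ℝ) ≠ 0) h1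

private lemma aux_ext [CompleteSpace F] (C : Set E) (hconv : Convex ℝ C)
    (hsym : ∀ x ∈ C, -x ∈ C) (h0 : (0 : E) ∈ C)
    (hdense : Dense ((Submodule.span ℝ C : Submodule ℝ E) : Set E))
    (f : E → F) (α : ℝ) (hbd : ∀ x ∈ C, ‖f x‖ ≤ α * ‖x‖) (hf0 : f 0 = 0)
    (hmid : ∀ x ∈ C, ∀ y ∈ C, f ((1/2 : ℝ) • (x + y)) = (1/2 : ℝ) • (f x + f y)) :
    ∃ g : E →L[ℝ] F, ∀ x ∈ C, g x = f x := by
  classical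
  have hadd := aux_hadd h0 f hf0 hmid
  -- C is closed under scaling by [0,1]
  have hsc : ∀ c ∈ C, ∀ t : ℝ, 0 ≤ t → t ≤ 1 → t • c ∈ C := by
    intro c hc t h0t ht1
    have := hconv h0 hc (by linarith : (0:ℝ) ≤ 1 - t) h0t (by ring)
    simpa using this
  -- homogeneity on [0,1]
  have hhom : ∀ c ∈ C, ∀ t : ℝ, 0 ≤ t → t ≤ 1 → f (t • c) = t • f c := by
    intro c hc t h0t ht1
    have key := aux_ray (fun s => f (s • c) - s • f c) (α * ‖c‖ + ‖f c‖) ?_ ?_ ?_ h0t ht1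
    · exact sub_eq_zero.mp key
    · intro s u hs hu hsu
      have hsC := hsc c hc s hs (by linarith)
      have huC := hsc c hc u hu (by linarith)
      have hsuC : s • c + u • c ∈ C := by
        rw [← add_smul]; exact hsc c hc (s + u) (by linarith) hsu
      rw [add_smul s u c, hadd _ hsC _ huC hsuC, add_smul s u (f c)]
      abel
    · intro s hs hs1
      have hsC := hsc c hc s hs hs1
      calc ‖f (s • c) - s • f c‖ ≤ ‖f (s • c)‖ + ‖s • f c‖ := norm_sub_le _ _
        _ ≤ α * ‖s • c‖ + ‖s • f c‖ := by
            have := hbd _ hsC; linarith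
        _ = (α * ‖c‖ + ‖f c‖) * s := by
            rw [norm_smul, norm_smul, Real.norm_of_nonneg hs]; ring
    · simp
  -- oddness
  have hneg : ∀ c ∈ C, f (-c) = -f c := by
    intro c hc
    have h1 := hmid c hc (-c) (hsym c hc)
    rw [add_neg_cancel, smul_zero, hf0] at h1
    have h2 : f c + f (-c) = 0 := by
      rcases smul_eq_zero.mp h1.symm with hcon | hc2
      · norm_num at hcon
      · exact hc2
    exact (neg_eq_of_add_eq_zero_right h2).symm
  -- well-definedness of values on rays
  have hwd0 : ∀ t s : ℝ, 0 < t → 0 < s → t ≤ s → ∀ c ∈ C, ∀ d ∈ C,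
      t • c = s • d → t • f c = s • f d := by
    intro t s ht hs hts c hc d hd heq
    have hd_eq : d = (t / s) • c := by
      apply smul_right_injective E hs.ne'
      show s • d = s • ((t / s) • c)
      rw [smul_smul]
      rw [show s * (t / s) = t by field_simp]
      exact heq.symm
    have hfd : f d = (t / s) • f c := by
      rw [hd_eq]
      exact hhom c hc (t / s) (by positivity) (by rw [div_le_one hs]; exact hts)
    rw [hfd, smul_smul, show s * (t / s) = t by field_simp]
  have hwd : ∀ t s : ℝ, 0 < t → 0 < s → ∀ c ∈ C, ∀ d ∈ C,
      t • c = s • d → t • f c = s • f d := by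
    intro t s ht hs c hc d hd heq
    rcases le_total t s with h | h
    · exact hwd0 t s ht hs h c hc d hd heq
    · exact (hwd0 s t hs ht h d hd c hc heq.symm).symm
  -- convex combinations
  have hcomb : ∀ a b : ℝ, 0 ≤ a → 0 ≤ b → a + b = 1 → ∀ c ∈ C, ∀ d ∈ C,
      f (a • c + b • d) = a • f c + b • f d := by
    intro a b ha hb hab c hc d hd
    have hac := hsc c hc a ha (by linarith)
    have hbd' := hsc d hd b hb (by linarith)
    have hsum : a • c + b • d ∈ C := hconv hc hd ha hb hab
    rw [hadd _ hac _ hbd' hsum, hhom c hc a ha (by linarith), hhom d hd b hb (by linarith)]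
  set p := Submodule.span ℝ C with hp
  have hrep : ∀ x : p, ∃ (t : ℝ) (c : E), 0 < t ∧ c ∈ C ∧ (x : E) = t • c :=
    fun x => aux_span hconv hsym h0 x.2
  choose T Cc hT hCc hXE using hrep
  set g1 : p → F := fun x => (T x) • f (Cc x) with hg1
  have hval : ∀ (x : p) (t : ℝ) (c : E), 0 < t → c ∈ C → (x : E) = t • c →
      g1 x = t • f c := by
    intro x t c ht hc hxe
    exact hwd (T x) t (hT x) ht (Cc x) (hCc x) c hc (by rw [← hXE x, hxe])
  have hadd1 : ∀ x y : p, g1 (x + y) = g1 x + g1 y := by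
    intro x y
    have ht := hT x; have hs := hT y
    have hmem : (T x / (T x + T y)) • Cc x + (T y / (T x + T y)) • Cc y ∈ C :=
      hconv (hCc x) (hCc y) (by positivity) (by positivity) (by field_simp)
    have hxy : ((x + y : p) : E)
        = (T x + T y) • ((T x / (T x + T y)) • Cc x + (T y / (T x + T y)) • Cc y) := by
      rw [Submodule.coe_add, hXE x, hXE y, smul_add, smul_smul, smul_smul,
        show (T x + T y) * (T x / (T x + T y)) = T x by field_simp,
        show (T x + T y) * (T y / (T x + T y)) = T y by field_simp]
    rw [hval (x + y) (T x + T y) _ (by positivity) hmem hxy,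
      hcomb (T x / (T x + T y)) (T y / (T x + T y)) (by positivity) (by positivity)
        (by field_simp) (Cc x) (hCc x) (Cc y) (hCc y),
      hval x (T x) (Cc x) ht (hCc x) (hXE x), hval y (T y) (Cc y) hs (hCc y) (hXE y),
      smul_add, smul_smul, smul_smul,
      show (T x + T y) * (T x / (T x + T y)) = T x by field_simp,
      show (T x + T y) * (T y / (T x + T y)) = T y by field_simp]
  have hzero1 : g1 0 = 0 := by
    rw [hval 0 1 0 one_pos h0 (by simp), hf0, smul_zero]
  have hsmul1 : ∀ (a : ℝ) (x : p), g1 (a • x) = a • g1 x := by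
    intro a x
    have ht := hT x
    rcases lt_trichotomy a 0 with hlt | heq | hgt
    · have hcast : ((a • x : p) : E) = ((-a) * T x) • (-(Cc x)) := by
        rw [Submodule.coe_smul, hXE x]; module
      rw [hval _ _ _ (mul_pos (neg_pos.2 hlt) ht) (hsym _ (hCc x)) hcast,
        hneg _ (hCc x), hval x (T x) (Cc x) ht (hCc x) (hXE x)]
      module
    · rw [heq, zero_smul, zero_smul, hzero1]
    · have hcast : ((a • x : p) : E) = (a * T x) • Cc x := by
        rw [Submodule.coe_smul, hXE x, smul_smul]
      rw [hval _ _ _ (mul_pos hgt ht) (hCc x) hcast,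
        hval x (T x) (Cc x) ht (hCc x) (hXE x), smul_smul]
  set g2 : p →ₗ[ℝ] F :=
    { toFun := g1, map_add' := hadd1, map_smul' := hsmul1 } with hg2
  have hg2bd : ∀ x : p, ‖g2 x‖ ≤ α * ‖x‖ := by
    intro x
    have hx : ‖(x : E)‖ = ‖x‖ := rfl
    show ‖g1 x‖ ≤ α * ‖x‖
    calc ‖g1 x‖ = T x * ‖f (Cc x)‖ := by
          rw [hg1]; simp only
          rw [norm_smul, Real.norm_of_nonneg (hT x).le]
      _ ≤ T x * (α * ‖Cc x‖) :=
          mul_le_mul_of_nonneg_left (hbd _ (hCc x)) (hT x).le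
      _ = α * ‖(x : E)‖ := by
          rw [hXE x, norm_smul, Real.norm_of_nonneg (hT x).le]; ring
      _ = α * ‖x‖ := by rw [hx]
  set g3 : p →L[ℝ] F := LinearMap.mkContinuous g2 α hg2bd with hg3
  set e : p →L[ℝ] E := p.subtypeL with he
  have hde : DenseRange e := by
    have hre : Set.range e = (p : Set E) := Subtype.range_coe
    rw [DenseRange, hre]
    exact hdense
  have hue : IsUniformInducing e := isometry_subtype_coe.isUniformInducing
  refine ⟨g3.extend e, ?_⟩
  intro x hx
  have hxp : x ∈ p := Submodule.subset_span hx
  have hext := ContinuousLinearMap.extend_eq g3 hde hue ⟨x, hxp⟩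
  rw [show e ⟨x, hxp⟩ = x from rfl] at hext
  rw [hext]
  show g1 ⟨x, hxp⟩ = f x
  rw [hval ⟨x, hxp⟩ 1 x one_pos hx (by simp), one_smul]


end Aux

/-- For a bounded map `f` on a symmetric convex generating subset `C` of a real normed
space, the following are equivalent: (1) `f` respects the convex structure (`f 0 = 0` and
`f` preserves midpoints); (2) `f` is additive on `C`; (3) `f` extends to a bounded
linear map `E → F`. -/
theorem convexMap_linear_tfae
    {E F : Type*} [NormedAddCommGroup E] [NormedSpace ℝ E]
    [NormedAddCommGroup F] [NormedSpace ℝ F] [CompleteSpace F]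
    (C : Set E) (hconv : Convex ℝ C) (hsym : ∀ x ∈ C, -x ∈ C) (h0 : (0 : E) ∈ C)
    (hdense : Dense ((Submodule.span ℝ C : Submodule ℝ E) : Set E))
    (f : E → F) (α : ℝ) (hbd : ∀ x ∈ C, ‖f x‖ ≤ α * ‖x‖) :
    ((f 0 = 0 ∧ ∀ x ∈ C, ∀ y ∈ C, f ((1/2 : ℝ) • (x + y)) = (1/2 : ℝ) • (f x + f y))
        ↔ (∀ x ∈ C, ∀ y ∈ C, x + y ∈ C → f (x + y) = f x + f y)) ∧
    ((f 0 = 0 ∧ ∀ x ∈ C, ∀ y ∈ C, f ((1/2 : ℝ) • (x + y)) = (1/2 : ℝ) • (f x + f y))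
        ↔ ∃ g : E →L[ℝ] F, ∀ x ∈ C, g x = f x) := by
  have hsc : ∀ c ∈ C, ∀ t : ℝ, 0 ≤ t → t ≤ 1 → t • c ∈ C := by
    intro c hc t h0t ht1
    have := hconv h0 hc (by linarith : (0:ℝ) ≤ 1 - t) h0t (by ring)
    simpa using this
  constructor
  · constructor
    · rintro ⟨hf0, hmid⟩
      exact aux_hadd h0 f hf0 hmid
    · intro hA
      have hf0 : f 0 = 0 := by
        have := hA 0 h0 0 h0 (by simpa using h0)
        rw [add_zero] at this
        exact (left_eq_add.mp this)
      refine ⟨hf0, ?_⟩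
      intro x hx y hy
      have hhalf : ∀ z ∈ C, f ((1/2 : ℝ) • z) = (1/2 : ℝ) • f z := by
        intro z hz
        have hzC := hsc z hz (1/2) (by norm_num) (by norm_num)
        have hsum : (1/2 : ℝ) • z + (1/2 : ℝ) • z = z := by
          rw [← add_smul]; norm_num
        have := hA _ hzC _ hzC (by rw [hsum]; exact hz)
        rw [hsum] at this
        -- this : f z = f ((1/2)•z) + f ((1/2)•z)
        have h2 : (2 : ℝ) • f ((1/2 : ℝ) • z) = f z := by
          rw [this, two_smul]
        calc f ((1/2 : ℝ) • z) = (1/2 : ℝ) • ((2:ℝ) • f ((1/2 : ℝ) • z)) := by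
              rw [smul_smul]; norm_num
          _ = (1/2 : ℝ) • f z := by rw [h2]
      have hxC := hsc x hx (1/2) (by norm_num) (by norm_num)
      have hyC := hsc y hy (1/2) (by norm_num) (by norm_num)
      have hsumC : (1/2 : ℝ) • x + (1/2 : ℝ) • y ∈ C :=
        hconv hx hy (by norm_num) (by norm_num) (by norm_num)
      have := hA _ hxC _ hyC hsumC
      rw [hhalf x hx, hhalf y hy] at this
      rw [smul_add, this, smul_add]
  · constructor
    · rintro ⟨hf0, hmid⟩
      exact aux_ext C hconv hsym h0 hdense f α hbd hf0 hmid
    · rintro ⟨g, hg⟩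
      constructor
      · rw [← hg 0 h0, map_zero]
      · intro x hx y hy
        have hmC : (1/2 : ℝ) • (x + y) ∈ C := by
          rw [smul_add]
          exact hconv hx hy (by norm_num) (by norm_num) (by norm_num)
        rw [← hg _ hmC, ← hg x hx, ← hg y hy, map_smul, map_add]
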